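/- For N ≥ 1, let λ_i = i/(2N+1−i) and let S₁ be the (N+1)×(N+1) symmetric matrix with (S₁)_{jj} = 2λ_j for j = 1,…,N, (S₁)_{N+1,N+1} = 1, and for i < j ≤ N, (S₁)_{ij} = (S₁)_{ji} = λ_j − λ_{j−1} (with λ₀ := 0), and (S₁)_{i,N+1} = (S₁)_{N+1,i} = 1 − λ_N for i ≤ N. Then S₁ is positive definite. -/

import Mathlib

set_option maxHeartbeats 1000000

/-- λ_i = i/(2N+1−i), with λ₀ = 0. -/
noncomputable def lamS (N i : ℕ) : ℝ := (i : ℝ) / (2 * N + 1 - i)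

/-- The (N+1)×(N+1) symmetric matrix S₁: diagonal entries (2λ₁,…,2λ_N,1),
off-diagonal entry λ_j − λ_{j−1} for the (i,j) position with i < j ≤ N (1-based),
and 1 − λ_N in the last row/column. -/
noncomputable def S1mat (N : ℕ) : Matrix (Fin (N + 1)) (Fin (N + 1)) ℝ :=
  Matrix.of fun i j =>
    if (i : ℕ) = N ∧ (j : ℕ) = N then 1
    else if (i : ℕ) = N ∨ (j : ℕ) = N then 1 - lamS N N
    else if i = j then 2 * lamS N (i + 1)
    else lamS N (max (i : ℕ) (j : ℕ) + 1) - lamS N (max (i : ℕ) (j : ℕ))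

/-- Weights in the sum-of-squares decomposition. -/
noncomputable def wS (N m : ℕ) : ℝ :=
  if m = N then 1
  else ((2*(N:ℝ)^2 + 2*(N:ℝ) + 1) - 2*((N:ℝ) - (m:ℝ))^2) / (2*(N:ℝ) - (m:ℝ))^2

/-- Coefficients of the linear forms in the sum-of-squares decomposition. -/
noncomputable def cS (N m i : ℕ) : ℝ :=
  if i = m then 1 else if i < m then 1 / (2*(N:ℝ) + 1 - (m:ℝ)) else 0

lemma wS_pos {N m : ℕ} (hN : 1 ≤ N) (hm : m ≤ N) : 0 < wS N m := by
  unfold wS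
  split
  · norm_num
  · have hmN : (m:ℝ) ≤ (N:ℝ) := by exact_mod_cast hm
    have hm0 : (0:ℝ) ≤ (m:ℝ) := Nat.cast_nonneg m
    have h1 : (1:ℝ) ≤ (N:ℝ) := by exact_mod_cast hN
    apply div_pos
    · nlinarith
    · nlinarith

lemma gS_sum (N j : ℕ) (hN : 1 ≤ N) (hj : j < N) :
    ∑ m ∈ Finset.Ico (j+1) (N+1), wS N m * (1 / (2*(N:ℝ) + 1 - (m:ℝ)))^2
      = 2 / (2*(N:ℝ) - (j:ℝ)) - (2*(N:ℝ) + 1) / (2*(N:ℝ) - (j:ℝ))^2 := by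
  have hN1 : ((N:ℝ)) + 1 ≠ 0 := by positivity
  have hjN : (j:ℝ) < (N:ℝ) := by exact_mod_cast hj
  have h2Nj : 2*(N:ℝ) - (j:ℝ) ≠ 0 := by nlinarith
  set g : ℕ → ℝ := fun m => (2*(N:ℝ)+1) / (2*(N:ℝ) + 1 - (m:ℝ))^2
      - 2 / (2*(N:ℝ) + 1 - (m:ℝ)) with hg
  rw [Finset.sum_Ico_succ_top (by omega : j + 1 ≤ N)]
  have hstep : ∀ m ∈ Finset.Ico (j+1) N,
      wS N m * (1 / (2*(N:ℝ) + 1 - (m:ℝ)))^2 = g (m+1) - g m := by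
    intro m hm
    rw [Finset.mem_Ico] at hm
    have hmN : (m:ℝ) < (N:ℝ) := by exact_mod_cast hm.2
    have hd1 : 2*(N:ℝ) + 1 - (m:ℝ) ≠ 0 := by nlinarith
    have hd2 : 2*(N:ℝ) - (m:ℝ) ≠ 0 := by nlinarith
    have hmne : m ≠ N := by omega
    rw [hg]
    simp only [wS, if_neg hmne]
    push_cast
    rw [show 2*(N:ℝ)+1-((m:ℝ)+1) = 2*(N:ℝ)-(m:ℝ) from by ring]
    field_simp
    ring
  rw [Finset.sum_congr rfl hstep, Finset.sum_Ico_eq_sub _ (by omega : j + 1 ≤ N),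
    Finset.sum_range_sub g, Finset.sum_range_sub g]
  have hNN : wS N N = 1 := by simp [wS]
  rw [hNN, hg]
  push_cast
  rw [show 2*(N:ℝ)+1-(N:ℝ) = (N:ℝ)+1 from by ring,
    show 2*(N:ℝ)+1-((j:ℝ)+1) = 2*(N:ℝ)-(j:ℝ) from by ring]
  field_simp
  ring

lemma S1_symm (N : ℕ) (i j : Fin (N+1)) : S1mat N i j = S1mat N j i := by
  rcases eq_or_ne i j with rfl | hne
  · rfl
  · by_cases h1 : (i:ℕ) = N <;> by_cases h2 : (j:ℕ) = N <;>
      simp [S1mat, h1, h2, if_neg hne, if_neg hne.symm, max_comm]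

lemma entry_le (N : ℕ) (hN : 1 ≤ N) (i j : Fin (N+1)) (hij : (i:ℕ) ≤ (j:ℕ)) :
    S1mat N i j = ∑ m ∈ Finset.range (N+1), wS N m * (cS N m i * cS N m j) := by
  have hjN : (j:ℕ) ≤ N := by omega
  have hsplit : ∑ m ∈ Finset.range (N+1), wS N m * (cS N m i * cS N m j)
      = (∑ m ∈ Finset.range ((j:ℕ)+1), wS N m * (cS N m i * cS N m j))
        + ∑ m ∈ Finset.Ico ((j:ℕ)+1) (N+1), wS N m * (cS N m i * cS N m j) := by
    exact (Finset.sum_range_add_sum_Ico _ (by omega : (j:ℕ)+1 ≤ N+1)).symm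
  have hfirst : ∑ m ∈ Finset.range ((j:ℕ)+1), wS N m * (cS N m i * cS N m j)
      = wS N j * cS N (j:ℕ) i := by
    rw [Finset.sum_eq_single_of_mem (j:ℕ) (Finset.mem_range.2 (by omega))]
    · have : cS N (j:ℕ) (j:ℕ) = 1 := by simp [cS]
      rw [this]; ring
    · intro b hb hbne
      have hb' : (j:ℕ) ≠ b := fun h => hbne h.symm
      have hb'' : ¬ (j:ℕ) < b := by rw [Finset.mem_range] at hb; omega
      have : cS N b (j:ℕ) = 0 := by simp [cS, hb', hb'']
      rw [this]; ring
  have hsecond : ∑ m ∈ Finset.Ico ((j:ℕ)+1) (N+1), wS N m * (cS N m i * cS N m j)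
      = ∑ m ∈ Finset.Ico ((j:ℕ)+1) (N+1), wS N m * (1 / (2*(N:ℝ) + 1 - (m:ℝ)))^2 := by
    refine Finset.sum_congr rfl fun m hm => ?_
    rw [Finset.mem_Ico] at hm
    have h1 : cS N m (i:ℕ) = 1 / (2*(N:ℝ) + 1 - (m:ℝ)) := by
      have : (i:ℕ) ≠ m := by omega
      have h2 : (i:ℕ) < m := by omega
      simp [cS, this, h2]
    have h1' : cS N m (j:ℕ) = 1 / (2*(N:ℝ) + 1 - (m:ℝ)) := by
      have : (j:ℕ) ≠ m := by omega
      have h2 : (j:ℕ) < m := by omega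
      simp [cS, this, h2]
    rw [h1, h1']; ring
  rw [hsplit, hfirst, hsecond]
  rcases eq_or_lt_of_le hjN with hjN' | hjN'
  · -- j = N : the Ico sum is empty
    rw [hjN']
    rw [show Finset.Ico (N+1) (N+1) = ∅ from Finset.Ico_self _, Finset.sum_empty]
    have hwN : wS N N = 1 := by simp [wS]
    rcases eq_or_lt_of_le hij with hij' | hij'
    · -- i = j = N
      have hiN : (i:ℕ) = N := by omega
      have hcN : cS N N N = 1 := by simp [cS]
      simp [S1mat, hiN, hjN', hwN, hcN]
    · -- i < j = N
      have hiN : (i:ℕ) ≠ N := by omega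
      have hc : cS N N (i:ℕ) = 1 / (2*(N:ℝ) + 1 - (N:ℝ)) := by
        have h2 : (i:ℕ) < N := by omega
        simp [cS, hiN, h2]
      have hNne : (2*(N:ℝ) + 1 - (N:ℝ)) ≠ 0 := by
        have : (0:ℝ) ≤ (N:ℝ) := Nat.cast_nonneg N
        intro h; nlinarith
      simp only [S1mat, Matrix.of_apply, hiN, hjN', false_and, if_false,
        or_true, if_true, hwN, hc, lamS, one_mul]
      rw [show 2*(N:ℝ)+1-(N:ℝ) = (N:ℝ)+1 from by ring] at *
      field_simp
      ring
  · -- j < N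
    rw [gS_sum N (j:ℕ) hN hjN']
    have hwj : wS N (j:ℕ) = ((2*(N:ℝ)^2 + 2*(N:ℝ) + 1) - 2*((N:ℝ) - (j:ℝ))^2)
        / (2*(N:ℝ) - (j:ℝ))^2 := by
      simp [wS, Nat.ne_of_lt hjN']
    have hjR : (j:ℝ) < (N:ℝ) := by exact_mod_cast hjN'
    have hjR0 : (0:ℝ) ≤ (j:ℝ) := Nat.cast_nonneg _
    have hd1 : 2*(N:ℝ) - (j:ℝ) ≠ 0 := by nlinarith
    have hd2 : 2*(N:ℝ) + 1 - (j:ℝ) ≠ 0 := by nlinarith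
    have hiN : (i:ℕ) ≠ N := by omega
    have hjNne : (j:ℕ) ≠ N := Nat.ne_of_lt hjN'
    rcases eq_or_lt_of_le hij with hij' | hij'
    · -- i = j < N
      have hijF : i = j := Fin.ext hij'
      have hc : cS N (j:ℕ) (i:ℕ) = 1 := by simp [cS, hij']
      simp only [S1mat, Matrix.of_apply, hiN, hjNne, false_and, if_false,
        false_or, if_neg hjNne, if_pos hijF, hc, mul_one, hwj, lamS]
      rw [hij']
      push_cast
      rw [show 2*(N:ℝ)+1-((j:ℝ)+1) = 2*(N:ℝ)-(j:ℝ) from by ring]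
      field_simp
      ring
    · -- i < j < N
      have hijF : i ≠ j := fun h => by rw [h] at hij'; omega
      have hc : cS N (j:ℕ) (i:ℕ) = 1 / (2*(N:ℝ) + 1 - (j:ℝ)) := by
        have h2 : (i:ℕ) < (j:ℕ) := hij'
        have h3 : (i:ℕ) ≠ (j:ℕ) := by omega
        simp [cS, h3, h2]
      have hmax : max (i:ℕ) (j:ℕ) = (j:ℕ) := max_eq_right hij
      simp only [S1mat, Matrix.of_apply, hiN, hjNne, false_and, if_false,
        false_or, if_neg hjNne, if_neg hijF, hmax, hc, hwj, lamS]
      push_cast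
      rw [show 2*(N:ℝ)+1-((j:ℝ)+1) = 2*(N:ℝ)-(j:ℝ) from by ring]
      field_simp
      ring

open Matrix in
theorem S1_posDef (N : ℕ) (hN : 1 ≤ N) : (S1mat N).PosDef := by
  rw [Matrix.posDef_iff_dotProduct_mulVec]
  constructor
  · show (S1mat N)ᴴ = S1mat N
    ext i j
    simp only [Matrix.conjTranspose_apply, star_trivial]
    exact S1_symm N j i
  · intro x hx
    have entry : ∀ i j : Fin (N+1), S1mat N i j
        = ∑ m ∈ Finset.range (N+1), wS N m * (cS N m i * cS N m j) := by
      intro i j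
      rcases le_total (i:ℕ) (j:ℕ) with h | h
      · exact entry_le N hN i j h
      · rw [S1_symm, entry_le N hN j i h]
        exact Finset.sum_congr rfl fun m _ => by ring
    have key : star x ⬝ᵥ (S1mat N) *ᵥ x
        = ∑ m ∈ Finset.range (N+1),
            wS N m * (∑ i : Fin (N+1), cS N m (i:ℕ) * x i)^2 := by
      calc star x ⬝ᵥ (S1mat N) *ᵥ x
          = ∑ i : Fin (N+1), ∑ j : Fin (N+1), x i * (S1mat N i j * x j) := by
            simp [dotProduct, Matrix.mulVec, Finset.mul_sum]
        _ = ∑ i : Fin (N+1), ∑ j : Fin (N+1), ∑ m ∈ Finset.range (N+1),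
              x i * ((wS N m * (cS N m i * cS N m j)) * x j) := by
            refine Finset.sum_congr rfl fun i _ => Finset.sum_congr rfl fun j _ => ?_
            rw [entry i j, Finset.sum_mul, Finset.mul_sum]
        _ = ∑ m ∈ Finset.range (N+1), ∑ i : Fin (N+1), ∑ j : Fin (N+1),
              x i * ((wS N m * (cS N m i * cS N m j)) * x j) := by
            trans ∑ i : Fin (N+1), ∑ m ∈ Finset.range (N+1), ∑ j : Fin (N+1),
              x i * ((wS N m * (cS N m i * cS N m j)) * x j)
            · exact Finset.sum_congr rfl fun i _ => Finset.sum_comm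
            · exact Finset.sum_comm
        _ = ∑ m ∈ Finset.range (N+1),
              wS N m * (∑ i : Fin (N+1), cS N m (i:ℕ) * x i)^2 := by
            refine Finset.sum_congr rfl fun m _ => ?_
            rw [sq, Finset.sum_mul_sum]
            simp_rw [Finset.mul_sum]
            exact Finset.sum_congr rfl fun i _ => Finset.sum_congr rfl fun j _ => by ring
    rw [key]
    have hnb : ∃ i, x i ≠ 0 := Function.ne_iff.mp hx
    set s : Finset (Fin (N+1)) := Finset.univ.filter (fun i => x i ≠ 0) with hs
    have hsne : s.Nonempty := by
      obtain ⟨i, hi⟩ := hnb; exact ⟨i, by simp [hs, hi]⟩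
    set m0 : Fin (N+1) := s.min' hsne with hm0
    have hxm0 : x m0 ≠ 0 := by
      have := s.min'_mem hsne
      simp only [hs, Finset.mem_filter, Finset.mem_univ, true_and] at this
      exact this
    have hxlt : ∀ i : Fin (N+1), i < m0 → x i = 0 := by
      intro i hi
      by_contra h
      have his : i ∈ s := by simp [hs, h]
      exact absurd (s.min'_le i his) (not_le.mpr hi)
    have hv : (∑ i : Fin (N+1), cS N ((m0:ℕ)) (i:ℕ) * x i) = x m0 := by
      rw [Finset.sum_eq_single m0]
      · simp [cS]
      · intro i _ hine
        rcases lt_or_gt_of_ne hine with h | h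
        · rw [hxlt i h, mul_zero]
        · have h1 : (i:ℕ) ≠ (m0:ℕ) := fun hh => hine (Fin.ext hh)
          have h2 : ¬ (i:ℕ) < (m0:ℕ) := not_lt.mpr (le_of_lt h)
          simp [cS, h1, h2]
      · intro h; exact absurd (Finset.mem_univ m0) h
    apply Finset.sum_pos'
    · intro m hm
      have hmN : m ≤ N := by rw [Finset.mem_range] at hm; omega
      exact mul_nonneg (le_of_lt (wS_pos hN hmN)) (sq_nonneg _)
    · refine ⟨(m0:ℕ), Finset.mem_range.2 (by omega), ?_⟩
      rw [hv]
      have hsq : 0 < (x m0)^2 := by positivity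
      exact mul_pos (wS_pos hN (by omega)) hsq
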